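/- Let V be a real Hilbert space, f a continuous linear functional on V, δ > 0, and let B̄, B_1, …, B_d be continuous bilinear forms on V such that for every y ∈ [−1,1]^d the bilinear form B_y(v,w) := B̄(v,w) + Σ_{j=1}^d y_j·B_j(v,w) is coercive with constant δ, i.e. B_y(v,v) ≥ δ·‖v‖² for all v ∈ V. Suppose that for each y ∈ [−1,1]^d, u(y) ∈ V satisfies B_y(u(y), w) = f(w) for all w ∈ V. Then for all y, ỹ ∈ [−1,1]^d one has ‖u(y) − u(ỹ)‖ ≤ C·max_{1≤j≤d} |y_j − ỹ_j|, where C = (Σ_{j=1}^d ‖B_j‖)·‖f‖/δ², with ‖B_j‖ the operator norm of the bilinear form B_j. -/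

import Mathlib

/-- The parameter cube `Y = [-1,1]^d`. -/
def cube (d : ℕ) : Set (Fin d → ℝ) := Set.univ.pi fun _ => Set.Icc (-1 : ℝ) 1

theorem statement17 {V : Type*} [NormedAddCommGroup V] [InnerProductSpace ℝ V] [CompleteSpace V]
    (d : ℕ) (hd : 0 < d) (f : V →L[ℝ] ℝ) (δ : ℝ) (hδ : 0 < δ)
    (Bbar : V →L[ℝ] V →L[ℝ] ℝ) (B : Fin d → (V →L[ℝ] V →L[ℝ] ℝ))
    (hcoer : ∀ y ∈ cube d, ∀ v : V, δ * ‖v‖ ^ 2 ≤ Bbar v v + ∑ j, y j * B j v v)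
    (u : (Fin d → ℝ) → V)
    (hu : ∀ y ∈ cube d, ∀ w : V, Bbar (u y) w + ∑ j, y j * B j (u y) w = f w) :
    ∀ y ∈ cube d, ∀ ytil ∈ cube d,
      ‖u y - u ytil‖ ≤
        ((∑ j, ‖B j‖) * ‖f‖ / δ ^ 2) * ⨆ j : Fin d, |y j - ytil j| := by
  intro y hy ytil hyt
  haveI : Nonempty (Fin d) := ⟨⟨0, hd⟩⟩
  set e := u y - u ytil with he
  set M := ⨆ j : Fin d, |y j - ytil j| with hM
  have hMb : BddAbove (Set.range fun j : Fin d => |y j - ytil j|) :=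
    (Set.finite_range _).bddAbove
  have hMle : ∀ j, |y j - ytil j| ≤ M := fun j => le_ciSup hMb j
  have hM0 : 0 ≤ M := le_trans (abs_nonneg _) (hMle ⟨0, hd⟩)
  have hS0 : (0:ℝ) ≤ ∑ j, ‖B j‖ := Finset.sum_nonneg fun j _ => ContinuousLinearMap.opNorm_nonneg _
  -- bound on ‖u ytil‖
  have hun : ‖u ytil‖ ≤ ‖f‖ / δ := by
    have h1 := hcoer ytil hyt (u ytil)
    rw [hu ytil hyt (u ytil)] at h1
    have h2 : f (u ytil) ≤ ‖f‖ * ‖u ytil‖ := by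
      calc f (u ytil) ≤ |f (u ytil)| := le_abs_self _
        _ = ‖f (u ytil)‖ := (Real.norm_eq_abs _).symm
        _ ≤ ‖f‖ * ‖u ytil‖ := f.le_opNorm _
    rw [le_div_iff₀ hδ]
    nlinarith [norm_nonneg (u ytil), norm_nonneg f]
  -- main estimate
  have h3 : δ * ‖e‖ ^ 2 ≤ ∑ j, (ytil j - y j) * B j (u ytil) e := by
    have h1 := hcoer y hy e
    have hey := hu y hy e
    have heyt := hu ytil hyt e
    have hexp : Bbar e e + ∑ j, y j * B j e e
        = (Bbar (u y) e + ∑ j, y j * B j (u y) e)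
          - (Bbar (u ytil) e + ∑ j, y j * B j (u ytil) e) := by
      simp only [he, map_sub, ContinuousLinearMap.sub_apply, mul_sub,
        Finset.sum_sub_distrib]
      ring
    rw [hexp, hey] at h1
    have hsub : ∑ j, (ytil j - y j) * B j (u ytil) e
        = (Bbar (u ytil) e + ∑ j, ytil j * B j (u ytil) e)
          - (Bbar (u ytil) e + ∑ j, y j * B j (u ytil) e) := by
      simp only [sub_mul]
      rw [Finset.sum_sub_distrib]
      ring
    rw [hsub, heyt]
    linarith
  have h4 : ∑ j, (ytil j - y j) * B j (u ytil) e
      ≤ M * ((∑ j, ‖B j‖) * (‖u ytil‖ * ‖e‖)) := by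
    rw [Finset.sum_mul, Finset.mul_sum]
    apply Finset.sum_le_sum
    intro j _
    have habs : |ytil j - y j| ≤ M := by
      rw [abs_sub_comm]; exact hMle j
    have hb : B j (u ytil) e ≤ ‖B j‖ * ‖u ytil‖ * ‖e‖ := by
      calc B j (u ytil) e ≤ |B j (u ytil) e| := le_abs_self _
        _ = ‖B j (u ytil) e‖ := (Real.norm_eq_abs _).symm
        _ ≤ ‖B j‖ * ‖u ytil‖ * ‖e‖ := (B j).le_opNorm₂ _ _
    have hbabs : |B j (u ytil) e| ≤ ‖B j‖ * ‖u ytil‖ * ‖e‖ := by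
      rw [← Real.norm_eq_abs]; exact (B j).le_opNorm₂ _ _
    calc (ytil j - y j) * B j (u ytil) e
        ≤ |(ytil j - y j) * B j (u ytil) e| := le_abs_self _
      _ = |ytil j - y j| * |B j (u ytil) e| := abs_mul _ _
      _ ≤ M * (‖B j‖ * ‖u ytil‖ * ‖e‖) := by
          apply mul_le_mul habs hbabs (abs_nonneg _) hM0
      _ = M * (‖B j‖ * (‖u ytil‖ * ‖e‖)) := by ring
  have h5 : δ * ‖e‖ ^ 2 ≤ M * ((∑ j, ‖B j‖) * ((‖f‖ / δ) * ‖e‖)) := by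
    refine h3.trans (h4.trans ?_)
    gcongr
  -- conclude
  rcases eq_or_lt_of_le (norm_nonneg e) with h0 | h0
  · rw [← h0]
    apply mul_nonneg _ hM0
    apply div_nonneg (mul_nonneg hS0 (norm_nonneg f)) (by positivity)
  · have : ‖e‖ * (δ * ‖e‖) ≤ ‖e‖ * (M * ((∑ j, ‖B j‖) * (‖f‖ / δ))) := by
      nlinarith
    have h6 : δ * ‖e‖ ≤ M * ((∑ j, ‖B j‖) * (‖f‖ / δ)) :=
      le_of_mul_le_mul_left (by linarith [this]) h0
    rw [div_mul_eq_mul_div, le_div_iff₀ (by positivity)]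
    have : δ ^ 2 * (δ * ‖e‖) ≤ δ ^ 2 * (M * ((∑ j, ‖B j‖) * (‖f‖ / δ))) := by
      apply mul_le_mul_of_nonneg_left h6 (by positivity)
    calc ‖e‖ * δ ^ 2 = (δ * ‖e‖) * δ := by ring
      _ ≤ (M * ((∑ j, ‖B j‖) * (‖f‖ / δ))) * δ := by
          apply mul_le_mul_of_nonneg_right h6 hδ.le
      _ = (∑ j, ‖B j‖) * ‖f‖ * M := by field_simp
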